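/- arXiv:2305.18193 — 3 statements merged into one kernel-verified Lean document; each statement's English description precedes it below -/
import Mathlib

section
/- Let x, z ∈ ℝ³ with x ≠ z, let Δ = ‖z − x‖₂, and for δ ≥ 0 define h_δ(x, z) = (z − x)/√(Δ² + δ²). Then the Jacobian of h_δ with respect to x satisfies (∂h_δ/∂x)ᵀ(∂h_δ/∂x) = (1/(Δ² + δ²))·(I₃ − ((Δ² + 2δ²)/(Δ² + δ²)²)(z − x)(z − x)ᵀ). -/
open Matrix

set_option maxHeartbeats 1000000

/-- The Jacobian D of x ↦ h_δ(x,z) = (z−x)/√(‖z−x‖² + δ²) satisfies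
Dᵀ D = (1/(Δ²+δ²))·(I − ((Δ²+2δ²)/(Δ²+δ²)²)(z−x)(z−x)ᵀ), where Δ = ‖z−x‖. -/
theorem stmt_8 (x z : EuclideanSpace ℝ (Fin 3)) (hxz : x ≠ z) (δ : ℝ) (hδ : 0 ≤ δ)
    (D : Matrix (Fin 3) (Fin 3) ℝ)
    (hD : HasFDerivAt
      (fun y : EuclideanSpace ℝ (Fin 3) =>
        (WithLp.toLp 2 (fun i => (z i - y i) / Real.sqrt (‖z - y‖ ^ 2 + δ ^ 2)) : EuclideanSpace ℝ (Fin 3)))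
      (Matrix.toEuclideanCLM (𝕜 := ℝ) D) x) :
    Dᵀ * D =
      ((‖z - x‖ ^ 2 + δ ^ 2)⁻¹) •
        ((1 : Matrix (Fin 3) (Fin 3) ℝ) -
          ((‖z - x‖ ^ 2 + 2 * δ ^ 2) / (‖z - x‖ ^ 2 + δ ^ 2) ^ 2) •
            Matrix.vecMulVec (fun i => z i - x i) (fun i => z i - x i)) := by
  have hnorm : ∀ y : EuclideanSpace ℝ (Fin 3),
      ‖z - y‖ ^ 2 = ∑ j, (z j - y j) * (z j - y j) := by
    intro y
    rw [EuclideanSpace.norm_eq, Real.sq_sqrt (by positivity)]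
    simp [sq_abs, pow_two]
  simp only [hnorm] at hD
  set r : ℝ := (∑ j, (z j - x j) * (z j - x j)) + δ ^ 2 with hr_def
  have hΔpos : 0 < ∑ j, (z j - x j) * (z j - x j) := by
    rw [← hnorm x]
    have h0 : z - x ≠ 0 := sub_ne_zero.mpr (Ne.symm hxz)
    exact pow_pos (norm_pos_iff.mpr h0) 2
  have hr : 0 < r := by positivity
  set s : ℝ := Real.sqrt r with hs_def
  have hs : 0 < s := Real.sqrt_pos.mpr hr
  have hs2 : s ^ 2 = r := Real.sq_sqrt hr.le
  have hDapp : ∀ i j, (Matrix.toEuclideanCLM (𝕜 := ℝ) D) (EuclideanSpace.single j (1:ℝ)) i = D i j := by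
    intro i j
    rw [EuclideanSpace.single, Matrix.toEuclideanCLM_toLp]
    simp [Matrix.toLin'_apply, Matrix.mulVec_single]
  have key : ∀ i j, D i j = (-(if i = j then 1 else 0) + (z i - x i) * (z j - x j) / r) / s := by
    intro i j
    have hproj : ∀ k : Fin 3, HasFDerivAt (fun y : EuclideanSpace ℝ (Fin 3) => z k - y k)
        ((0 : EuclideanSpace ℝ (Fin 3) →L[ℝ] ℝ) - EuclideanSpace.proj k) x :=
      fun k => (hasFDerivAt_const (z k) x).sub
        ((EuclideanSpace.proj (𝕜 := ℝ) (ι := Fin 3) k).hasFDerivAt (x := x))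
    have hq : HasFDerivAt (fun y : EuclideanSpace ℝ (Fin 3) =>
        (∑ k, (z k - y k) * (z k - y k)) + δ ^ 2)
        (∑ k, ((z k - x k) • ((0 : EuclideanSpace ℝ (Fin 3) →L[ℝ] ℝ) - EuclideanSpace.proj k)
          + (z k - x k) • ((0 : EuclideanSpace ℝ (Fin 3) →L[ℝ] ℝ) - EuclideanSpace.proj k))) x :=
      (HasFDerivAt.fun_sum (fun k _ => (hproj k).mul (hproj k))).add_const _
    have hsqrt := hq.sqrt hr.ne'
    have hinv := (hasDerivAt_inv hs.ne').comp_hasFDerivAt x hsqrt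
    have hdiv := (hproj i).mul hinv
    have hcomp : HasFDerivAt (fun y : EuclideanSpace ℝ (Fin 3) =>
        (z i - y i) * (Real.sqrt ((∑ k, (z k - y k) * (z k - y k)) + δ ^ 2))⁻¹)
        ((EuclideanSpace.proj i).comp (Matrix.toEuclideanCLM (𝕜 := ℝ) D)) x := by
      have := (EuclideanSpace.proj i).hasFDerivAt.comp x hD
      simpa [Function.comp_def, div_eq_mul_inv] using this
    have huniq := hdiv.unique hcomp
    have hev := DFunLike.congr_fun huniq (EuclideanSpace.single j (1:ℝ))
    simp only [ContinuousLinearMap.add_apply, ContinuousLinearMap.smul_apply,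
      ContinuousLinearMap.sum_apply, ContinuousLinearMap.sub_apply,
      ContinuousLinearMap.zero_apply, ContinuousLinearMap.comp_apply, ContinuousLinearMap.neg_apply, PiLp.proj_apply,
      EuclideanSpace.single_apply, Function.comp_apply, smul_eq_mul, zero_sub, mul_neg,
      neg_zero, mul_ite, mul_zero, ite_add_ite, Finset.sum_ite_eq',
      Finset.mem_univ, if_true, hs2, mul_one, Finset.sum_add_distrib, Finset.sum_neg_distrib] at hev
    rw [hDapp i j] at hev
    rw [← hr_def] at hev
    rw [← hs_def] at hev
    rw [← hev, ← hs2]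
    split_ifs <;> field_simp <;> ring
  have hDA : D = s⁻¹ • Matrix.of (fun i j =>
      -(if i = j then (1:ℝ) else 0) + (z i - x i) * (z j - x j) / r) := by
    ext i j
    rw [key i j]
    simp [div_eq_inv_mul]
  have hss : s⁻¹ * s⁻¹ = r⁻¹ := by
    rw [← mul_inv, ← pow_two, hs2]
  have e2 : (∑ j, (z j - x j) * (z j - x j)) + 2 * δ ^ 2 = r + δ ^ 2 := by
    rw [hr_def]; ring
  rw [hnorm x, ← hr_def, e2, hDA, Matrix.transpose_smul, Matrix.smul_mul, Matrix.mul_smul,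
    smul_smul, hss]
  congr 1
  have hδ2 : δ ^ 2 = r - ((z 0 - x 0) * (z 0 - x 0) + (z 1 - x 1) * (z 1 - x 1)
      + (z 2 - x 2) * (z 2 - x 2)) := by
    rw [hr_def]; simp [Fin.sum_univ_three]
  rw [hδ2]
  clear hδ2 e2 key hDA hD hnorm hs2 hΔpos hr_def hs_def
  clear_value r s
  clear hδ hxz
  ext i j
  fin_cases i <;> fin_cases j <;>
    simp only [Fin.zero_eta, Fin.mk_one, Fin.reduceFinMk, Matrix.mul_apply, Matrix.sub_apply,
      Matrix.smul_apply, Matrix.one_apply, Matrix.of_apply, Matrix.transpose_apply,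
      Matrix.vecMulVec_apply, Fin.sum_univ_three, smul_eq_mul, Fin.reduceEq,
      ite_true, ite_false] <;>
    field_simp [hr.ne'] <;> ring
end

section
/- Let x, z ∈ ℝ³ with Δ = ‖z − x‖₂ > 0, δ > 0, and suppose δ/Δ ≤ ζ⁻¹ for some ζ > 0. Define S^δ = (1/(Δ² + δ²))·(I₃ − ((Δ² + 2δ²)/(Δ² + δ²)²)(z − x)(z − x)ᵀ) and S⁰ = (1/Δ²)·(I₃ − (1/Δ²)(z − x)(z − x)ᵀ). Then the spectral norm satisfies ‖S^δ − S⁰‖₂ ≤ Δ⁻²/(1 + ζ²). -/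
set_option maxHeartbeats 1000000

open Matrix Finset

/-- Spectral-norm perturbation bound: if δ/Δ ≤ ζ⁻¹ with Δ = ‖z−x‖ > 0, then
‖S^δ − S⁰‖₂ ≤ Δ⁻²/(1 + ζ²). -/
theorem stmt_9 (x z : EuclideanSpace ℝ (Fin 3)) (hΔ : 0 < ‖z - x‖) (δ ζ : ℝ)
    (hδ : 0 < δ) (hζ : 0 < ζ) (hratio : δ / ‖z - x‖ ≤ ζ⁻¹)
    (Sδ S0 : Matrix (Fin 3) (Fin 3) ℝ)
    (hSδ : Sδ = ((‖z - x‖ ^ 2 + δ ^ 2)⁻¹) •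
      ((1 : Matrix (Fin 3) (Fin 3) ℝ) -
        ((‖z - x‖ ^ 2 + 2 * δ ^ 2) / (‖z - x‖ ^ 2 + δ ^ 2) ^ 2) •
          Matrix.vecMulVec (fun i => z i - x i) (fun i => z i - x i)))
    (hS0 : S0 = ((‖z - x‖ ^ 2)⁻¹) •
      ((1 : Matrix (Fin 3) (Fin 3) ℝ) -
        ((‖z - x‖ ^ 2)⁻¹) •
          Matrix.vecMulVec (fun i => z i - x i) (fun i => z i - x i))) :
    ‖Matrix.toEuclideanCLM (𝕜 := ℝ) (Sδ - S0)‖ ≤ (‖z - x‖ ^ 2)⁻¹ / (1 + ζ ^ 2) := by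
  set Δ := ‖z - x‖ with hΔdef
  set D := Δ ^ 2 with hD
  have hD0 : 0 < D := by positivity
  set d := δ ^ 2 with hd
  have hd0 : 0 < d := by positivity
  have hDd : 0 < D + d := by positivity
  have hz : 0 < 1 + ζ ^ 2 := by positivity
  -- ratio fact
  have hk : d * ζ ^ 2 ≤ D := by
    rw [div_le_iff₀ hΔ] at hratio
    have h1 : δ * ζ ≤ Δ := by
      have := mul_le_mul_of_nonneg_right hratio hζ.le
      rwa [mul_comm ζ⁻¹ Δ, mul_assoc, inv_mul_cancel₀ hζ.ne', mul_one] at this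
    nlinarith [mul_pos hδ hζ]
  set a : ℝ := (D + d)⁻¹ - D⁻¹ with ha
  set b : ℝ := D⁻¹ * D⁻¹ - (D + 2 * d) / (D + d) ^ 2 * (D + d)⁻¹ with hb
  set K : ℝ := D⁻¹ / (1 + ζ ^ 2) with hK
  have hK0 : 0 ≤ K := by positivity
  have ha2 : a ^ 2 ≤ K ^ 2 := by
    have e1 : a ^ 2 = d ^ 2 / (D ^ 2 * (D + d) ^ 2) := by
      rw [ha]; field_simp; ring
    have e2 : K ^ 2 = 1 / (D ^ 2 * (1 + ζ ^ 2) ^ 2) := by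
      rw [hK]; field_simp
    have h3 : d * (1 + ζ ^ 2) ≤ D + d := by nlinarith
    rw [e1, e2, div_le_div_iff₀ (by positivity) (by positivity)]
    nlinarith [pow_le_pow_left₀ (by positivity : (0:ℝ) ≤ d * (1 + ζ ^ 2)) h3 2,
      sq_nonneg D, mul_pos hD0 hD0]
  have hbpos : 0 ≤ b := by
    have e3 : b = ((D + d) ^ 3 - D ^ 2 * (D + 2 * d)) / (D ^ 2 * (D + d) ^ 3) := by
      rw [hb]; field_simp
    rw [e3]
    apply div_nonneg _ (by positivity)
    nlinarith [sq_nonneg d, mul_pos hD0 hd0]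
  have hc : 2 * a * b + b ^ 2 * D ≤ 0 := by
    have h2 : 2 * a + b * D ≤ 0 := by
      have e4 : 2 * a + b * D = -((D ^ 2 * d + D * d ^ 2 + d ^ 3) / (D * (D + d) ^ 3)) := by
        rw [ha, hb]; field_simp; ring
      rw [e4, neg_nonpos]
      positivity
    have e5 : 2 * a * b + b ^ 2 * D = b * (2 * a + b * D) := by ring
    rw [e5]
    exact mul_nonpos_of_nonneg_of_nonpos hbpos h2
  -- now operator norm
  apply ContinuousLinearMap.opNorm_le_bound _ (by positivity)
  intro w
  set v : Fin 3 → ℝ := fun i => z i - x i with hv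
  have hvsum : v 0 ^ 2 + v 1 ^ 2 + v 2 ^ 2 = D := by
    have h := PiLp.norm_sq_eq_of_L2 (fun _ : Fin 3 => ℝ) (z - x)
    simp only [Real.norm_eq_abs, sq_abs, Fin.sum_univ_three, PiLp.sub_apply] at h
    rw [hD, hΔdef, h]
  set S : ℝ := v 0 * w 0 + v 1 * w 1 + v 2 * w 2 with hS
  have happ : ∀ i, (Matrix.toEuclideanCLM (𝕜 := ℝ) (Sδ - S0) w) i =
      a * w i + b * S * v i := by
    intro i
    have h1 : (Matrix.toEuclideanCLM (𝕜 := ℝ) (Sδ - S0) w) i =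
        ((Sδ - S0).mulVec (fun j => w j)) i := rfl
    have hM : Sδ - S0 = a • (1 : Matrix (Fin 3) (Fin 3) ℝ) + b • vecMulVec v v := by
      rw [hSδ, hS0, smul_sub, smul_sub, smul_smul, smul_smul, ha, hb]
      module
    rw [h1, hM]
    fin_cases i <;>
    · simp [Matrix.add_mulVec, Matrix.smul_mulVec, Matrix.one_mulVec, Matrix.mulVec,
        dotProduct, Fin.sum_univ_three, Matrix.vecMulVec_apply, Matrix.add_apply,
        Matrix.smul_apply, Matrix.one_apply, hS]
      ring
  -- squared inequality
  have hsq : ‖Matrix.toEuclideanCLM (𝕜 := ℝ) (Sδ - S0) w‖ ^ 2 ≤ (K * ‖w‖) ^ 2 := by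
    have hw2 : ‖w‖ ^ 2 = w 0 ^ 2 + w 1 ^ 2 + w 2 ^ 2 := by
      have h := PiLp.norm_sq_eq_of_L2 (fun _ : Fin 3 => ℝ) w
      simpa [Fin.sum_univ_three, Real.norm_eq_abs, sq_abs] using h
    have hT2 : ‖Matrix.toEuclideanCLM (𝕜 := ℝ) (Sδ - S0) w‖ ^ 2 =
        (a * w 0 + b * S * v 0) ^ 2 + (a * w 1 + b * S * v 1) ^ 2 +
        (a * w 2 + b * S * v 2) ^ 2 := by
      have h := PiLp.norm_sq_eq_of_L2 (fun _ : Fin 3 => ℝ)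
        (Matrix.toEuclideanCLM (𝕜 := ℝ) (Sδ - S0) w)
      simp only [Fin.sum_univ_three, Real.norm_eq_abs, sq_abs] at h
      rw [h, happ 0, happ 1, happ 2]
    rw [hT2, mul_pow, hw2]
    have key : (a * w 0 + b * S * v 0) ^ 2 + (a * w 1 + b * S * v 1) ^ 2 +
        (a * w 2 + b * S * v 2) ^ 2 =
        a ^ 2 * (w 0 ^ 2 + w 1 ^ 2 + w 2 ^ 2)
          + (2 * a * b + b ^ 2 * (v 0 ^ 2 + v 1 ^ 2 + v 2 ^ 2)) * S ^ 2 := by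
      simp only [hS]; ring
    rw [key, hvsum]
    linarith [mul_nonpos_of_nonpos_of_nonneg hc (sq_nonneg S),
      mul_le_mul_of_nonneg_right ha2 (by positivity : (0:ℝ) ≤ w 0 ^ 2 + w 1 ^ 2 + w 2 ^ 2)]
  have := Real.sqrt_le_sqrt hsq
  rwa [Real.sqrt_sq (norm_nonneg _), Real.sqrt_sq (by positivity)] at this
end

section
/- Suppose R_min > 0, σ_m > 0, M ∈ ℕ, η > 0, ζ > 1, and ‖x − z_j‖₂ ≥ R_min for all j ≤ M. Set s₀ = (η/(η+1))·(R_min²/M)·σ_m²·(1 + ζ²). For any δ ∈ (0, R_min/ζ): if tr(𝒥_δ(x; z_{1:M})⁻¹) = s ≤ s₀, then s/(1+η) ≤ tr(𝒥₀(x; z_{1:M})⁻¹) ≤ s(1+η), and symmetrically with the roles of 𝒥_δ and 𝒥₀ exchanged. -/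
open Matrix

section AuxMatrix

variable {n : Type*} [Fintype n] [DecidableEq n]

lemma psd_smul {c : ℝ} (hc : 0 ≤ c) {M : Matrix n n ℝ} (hM : M.PosSemidef) :
    (c • M).PosSemidef := by
  refine Matrix.PosSemidef.of_dotProduct_mulVec_nonneg ?_ fun x => ?_
  · unfold Matrix.IsHermitian
    rw [Matrix.conjTranspose_smul, hM.1.eq]
    simp
  · rw [Matrix.smul_mulVec, dotProduct_smul]
    exact mul_nonneg hc (hM.dotProduct_mulVec_nonneg x)

lemma pd_smul {c : ℝ} (hc : 0 < c) {M : Matrix n n ℝ} (hM : M.PosDef) :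
    (c • M).PosDef := by
  refine Matrix.PosDef.of_dotProduct_mulVec_pos (psd_smul hc.le hM.posSemidef).1 fun x hx => ?_
  rw [Matrix.smul_mulVec, dotProduct_smul]
  exact mul_pos hc (hM.dotProduct_mulVec_pos hx)

lemma psd_sum {m : ℕ} (f : Fin m → Matrix n n ℝ) (h : ∀ j, (f j).PosSemidef) :
    (∑ j, f j).PosSemidef := by
  classical
  refine Finset.sum_induction f _ (fun a b ha hb => ha.add hb) ?_ (fun i _ => h i)
  exact Matrix.PosSemidef.zero

lemma trace_pos' {M : Matrix n n ℝ} [Nonempty n] (hM : M.PosDef) : 0 < M.trace := by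
  have h : ∀ i, 0 < M i i := by
    intro i
    exact hM.diag_pos
  exact Finset.sum_pos (fun i _ => h i) Finset.univ_nonempty

lemma trace_nonneg' {M : Matrix n n ℝ} (hM : M.PosSemidef) : 0 ≤ M.trace := by
  have h : ∀ i, 0 ≤ M i i := by
    intro i
    exact hM.diag_nonneg
  exact Finset.sum_nonneg (fun i _ => h i)

lemma trace_mono' {P Q : Matrix n n ℝ} (h : (Q - P).PosSemidef) : P.trace ≤ Q.trace := by
  have := trace_nonneg' h
  rw [Matrix.trace_sub] at this
  linarith

open scoped MatrixOrder in
lemma trace_smul_one_sub_psd {C : Matrix n n ℝ} (hC : C.PosSemidef) :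
    ((C.trace) • (1 : Matrix n n ℝ) - C).PosSemidef := by
  classical
  set R := CFC.sqrt C with hR
  have hRR : R * R = C := CFC.sqrt_mul_sqrt_self C hC.nonneg
  have hRh : R.IsHermitian := (CFC.sqrt_nonneg C).posSemidef.isHermitian
  refine Matrix.PosSemidef.of_dotProduct_mulVec_nonneg ?_ fun x => ?_
  · refine Matrix.IsHermitian.sub ?_ hC.isHermitian
    unfold Matrix.IsHermitian
    rw [Matrix.conjTranspose_smul, Matrix.isHermitian_one.eq]
    simp
  · have hx : star x = x := by simp
    rw [Matrix.sub_mulVec, dotProduct_sub, Matrix.smul_mulVec,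
      Matrix.one_mulVec, dotProduct_smul, hx]
    have hq : x ⬝ᵥ C *ᵥ x = ∑ i, (R *ᵥ x) i ^ 2 := by
      rw [← hRR, ← Matrix.mulVec_mulVec]
      rw [Matrix.dotProduct_mulVec x R]
      have hT : Rᵀ = R := by
        ext i j
        have := congrFun (congrFun hRh.eq i) j
        simpa using this
      have : Matrix.vecMul x R = R *ᵥ x := by
        conv_lhs => rw [← hT]
        rw [Matrix.vecMul_transpose]
      rw [this]
      simp [dotProduct, pow_two]
    have htr : C.trace = ∑ i, ∑ j, R i j ^ 2 := by
      rw [← hRR]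
      simp [Matrix.trace, Matrix.mul_apply, Matrix.diag, pow_two]
      congr 1; ext i; congr 1; ext j
      have : R j i = R i j := by
        have := congrFun (congrFun hRh.eq i) j
        simpa [Matrix.conjTranspose_apply] using this
      rw [this]
    have hCS : ∀ i, (R *ᵥ x) i ^ 2 ≤ (∑ j, R i j ^ 2) * (∑ j, x j ^ 2) := by
      intro i
      have := Finset.sum_mul_sq_le_sq_mul_sq Finset.univ (fun j => R i j) x
      simpa [Matrix.mulVec, dotProduct] using this
    have h1 : x ⬝ᵥ C *ᵥ x ≤ (∑ i, ∑ j, R i j ^ 2) * (∑ j, x j ^ 2) := by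
      rw [hq, Finset.sum_mul]
      exact Finset.sum_le_sum fun i _ => hCS i
    have h2 : x ⬝ᵥ x = ∑ j, x j ^ 2 := by simp [dotProduct, pow_two]
    rw [htr, h2, smul_eq_mul]
    linarith [h1]

lemma inv_antitone {X Y : Matrix n n ℝ} (hX : X.PosDef) (hY : Y.PosDef)
    (hXY : (Y - X).PosSemidef) : (X⁻¹ - Y⁻¹).PosSemidef := by
  have hdX : IsUnit X.det := hX.det_pos.ne'.isUnit
  have hdY : IsUnit Y.det := hY.det_pos.ne'.isUnit
  have hXi : X * X⁻¹ = 1 := Matrix.mul_nonsing_inv _ hdX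
  have hXi' : X⁻¹ * X = 1 := Matrix.nonsing_inv_mul _ hdX
  have hYi : Y * Y⁻¹ = 1 := Matrix.mul_nonsing_inv _ hdY
  have hYi' : Y⁻¹ * Y = 1 := Matrix.nonsing_inv_mul _ hdY
  have hid : X⁻¹ - Y⁻¹ =
      Y⁻¹ * (Y - X) * Y⁻¹ + (Y⁻¹ * (Y - X)) * X⁻¹ * ((Y - X) * Y⁻¹) := by
    simp only [Matrix.mul_sub, Matrix.sub_mul, Matrix.mul_assoc, hYi, hXi, hYi', hXi',
      Matrix.mul_one, Matrix.one_mul]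
    simp only [Matrix.nonsing_inv_mul_cancel_left (A := X) (h := hdX),
      Matrix.nonsing_inv_mul_cancel_left (A := Y) (h := hdY),
      Matrix.mul_nonsing_inv_cancel_left (A := X) (h := hdX),
      Matrix.mul_nonsing_inv_cancel_left (A := Y) (h := hdY)]
    abel
  rw [hid]
  have hP1 : (Y⁻¹ * (Y - X) * Y⁻¹).PosSemidef := by
    have := hXY.conjTranspose_mul_mul_same (Y⁻¹)
    rwa [hY.isHermitian.inv.eq] at this
  have hP2 : ((Y⁻¹ * (Y - X)) * X⁻¹ * ((Y - X) * Y⁻¹)).PosSemidef := by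
    have := (hX.inv.posSemidef).conjTranspose_mul_mul_same ((Y - X) * Y⁻¹)
    have hadj : ((Y - X) * Y⁻¹)ᴴ = Y⁻¹ * (Y - X) := by
      rw [Matrix.conjTranspose_mul, hY.isHermitian.inv.eq, hXY.isHermitian.eq]
    rwa [hadj] at this
  exact hP1.add hP2

lemma smul_mat_inv {c : ℝ} (hc : c ≠ 0) {M : Matrix n n ℝ} (hM : IsUnit M.det) :
    (c • M)⁻¹ = c⁻¹ • M⁻¹ := by
  apply Matrix.inv_eq_right_inv
  rw [smul_mul_smul_comm, Matrix.mul_nonsing_inv _ hM, mul_inv_cancel₀ hc, one_smul]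

lemma smul_one_inv {c : ℝ} (hc : c ≠ 0) :
    ((c • (1 : Matrix n n ℝ))⁻¹) = c⁻¹ • (1 : Matrix n n ℝ) := by
  have h1 : (1 : Matrix n n ℝ)⁻¹ = 1 := Matrix.inv_eq_right_inv (by simp)
  rw [smul_mat_inv hc (by simp), h1]

lemma key_lemma [Nonempty n] {A B : Matrix n n ℝ} (hA : A.PosDef) (hB : B.PosDef)
    {ε η s : ℝ} (hη : 0 < η) (hε : 0 < ε)
    (h1 : (ε • (1 : Matrix n n ℝ) - (B - A)).PosSemidef)
    (h2 : (ε • (1 : Matrix n n ℝ) - (A - B)).PosSemidef)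
    (htr : A⁻¹.trace = s) (hs : ε * s ≤ η / (1 + η)) :
    s / (1 + η) ≤ B⁻¹.trace ∧ B⁻¹.trace ≤ s * (1 + η) := by
  have hη1 : (0:ℝ) < 1 + η := by linarith
  have hAinv : A⁻¹.PosDef := hA.inv
  have hspos : 0 < s := htr ▸ trace_pos' hAinv
  have hcancel : (1+η) * (η/(1+η)) = η := by field_simp
  have h' : (1+η) * (ε * s) ≤ η := by
    have := mul_le_mul_of_nonneg_left hs hη1.le
    linarith [this, hcancel.le]
  have hεs1 : ε * s < 1 := by nlinarith
  have hc2 : ε < s⁻¹ := by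
    rw [inv_eq_one_div, lt_div_iff₀ hspos]; nlinarith
  have hc1 : (1+η) * ε ≤ η * s⁻¹ := by
    rw [inv_eq_one_div, mul_one_div, le_div_iff₀ hspos]; nlinarith
  have hs1pd : ((s:ℝ) • (1 : Matrix n n ℝ)).PosDef := pd_smul hspos Matrix.PosDef.one
  have hub : ((s • (1:Matrix n n ℝ)) - A⁻¹).PosSemidef := by
    have := trace_smul_one_sub_psd hAinv.posSemidef; rwa [htr] at this
  have hA1 : (A - s⁻¹ • 1).PosSemidef := by
    have h := inv_antitone hAinv hs1pd hub
    rwa [smul_one_inv hspos.ne',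
      Matrix.nonsing_inv_nonsing_inv _ hA.det_pos.ne'.isUnit] at h
  have hcore : ((η • A - ((1+η)*ε) • (1:Matrix n n ℝ))).PosSemidef := by
    have e : η • A - ((1+η)*ε) • (1:Matrix n n ℝ)
        = η • (A - s⁻¹ • 1) + ((η * s⁻¹ - (1+η)*ε)) • (1:Matrix n n ℝ) := by module
    rw [e]
    exact (psd_smul hη.le hA1).add (psd_smul (by linarith) Matrix.PosDef.one.posSemidef)
  have hAe : (A - ε • (1:Matrix n n ℝ)).PosDef := by
    have e : A - ε • (1:Matrix n n ℝ) = (A - s⁻¹ • 1) + (s⁻¹ - ε) • (1:Matrix n n ℝ) := by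
      module
    rw [e]
    exact Matrix.PosDef.posSemidef_add hA1 (pd_smul (by linarith) Matrix.PosDef.one)
  have hAe2 : (A + ε • (1:Matrix n n ℝ)).PosDef :=
    hA.add_posSemidef (psd_smul hε.le Matrix.PosDef.one.posSemidef)
  have hABe : (B - (A - ε • (1:Matrix n n ℝ))).PosSemidef := by
    have e : (ε • (1:Matrix n n ℝ) - (A - B)) = B - (A - ε • 1) := by module
    rwa [e] at h2
  have hu1 : ((A - ε • (1:Matrix n n ℝ))⁻¹ - B⁻¹).PosSemidef := inv_antitone hAe hB hABe
  have hYpd : ((1+η) • (A - ε • (1:Matrix n n ℝ))).PosDef := pd_smul hη1 hAe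
  have hAY : (((1+η) • (A - ε • (1:Matrix n n ℝ))) - A).PosSemidef := by
    have e : ((1+η) • (A - ε • (1:Matrix n n ℝ))) - A = η • A - ((1+η)*ε) • 1 := by module
    rw [e]; exact hcore
  have hu2 : (A⁻¹ - ((1+η) • (A - ε • (1:Matrix n n ℝ)))⁻¹).PosSemidef :=
    inv_antitone hA hYpd hAY
  have hu2' : ((1+η) • A⁻¹ - (A - ε • (1:Matrix n n ℝ))⁻¹).PosSemidef := by
    rw [smul_mat_inv hη1.ne' hAe.det_pos.ne'.isUnit] at hu2
    have := psd_smul hη1.le hu2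
    rwa [smul_sub, smul_smul, mul_inv_cancel₀ hη1.ne', one_smul] at this
  have hup : B⁻¹.trace ≤ s * (1+η) := by
    have t1 : B⁻¹.trace ≤ ((A - ε • (1:Matrix n n ℝ))⁻¹).trace := trace_mono' hu1
    have t2 : ((A - ε • (1:Matrix n n ℝ))⁻¹).trace ≤ ((1+η) • A⁻¹).trace := trace_mono' hu2'
    rw [Matrix.trace_smul, htr, smul_eq_mul] at t2
    linarith
  have hBAe : ((A + ε • (1:Matrix n n ℝ)) - B).PosSemidef := by
    have e : (ε • (1:Matrix n n ℝ) - (B - A)) = (A + ε • 1) - B := by module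
    rwa [e] at h1
  have hl1 : (B⁻¹ - (A + ε • (1:Matrix n n ℝ))⁻¹).PosSemidef := inv_antitone hB hAe2 hBAe
  have hXpd : ((1+η)⁻¹ • (A + ε • (1:Matrix n n ℝ))).PosDef :=
    pd_smul (by positivity) hAe2
  have hl2pre : (A - (1+η)⁻¹ • (A + ε • (1:Matrix n n ℝ))).PosSemidef := by
    have e : A - (1+η)⁻¹ • (A + ε • (1:Matrix n n ℝ))
        = (1+η)⁻¹ • ((η • A - ((1+η)*ε) • 1) + (η*ε) • 1) := by
      match_scalars
      · field_simp
        ring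
      · field_simp
        ring
    rw [e]
    exact psd_smul (by positivity)
      (hcore.add (psd_smul (by positivity) Matrix.PosDef.one.posSemidef))
  have hl2 : (((1+η) • (A + ε • (1:Matrix n n ℝ))⁻¹) - A⁻¹).PosSemidef := by
    have := inv_antitone hXpd hA hl2pre
    rwa [smul_mat_inv (inv_ne_zero hη1.ne') hAe2.det_pos.ne'.isUnit, inv_inv] at this
  have hlow : s / (1+η) ≤ B⁻¹.trace := by
    have t1 : ((A + ε • (1:Matrix n n ℝ))⁻¹).trace ≤ B⁻¹.trace := trace_mono' hl1
    have t2 : A⁻¹.trace ≤ ((1+η) • (A + ε • (1:Matrix n n ℝ))⁻¹).trace := trace_mono' hl2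
    rw [Matrix.trace_smul, smul_eq_mul, htr] at t2
    rw [div_le_iff₀ hη1]
    nlinarith
  exact ⟨hlow, hup⟩

end AuxMatrix

lemma dot_vecMulVec (v x : Fin 3 → ℝ) :
    x ⬝ᵥ (Matrix.vecMulVec v v *ᵥ x) = (∑ i, v i * x i) ^ 2 := by
  calc x ⬝ᵥ (Matrix.vecMulVec v v *ᵥ x) = ∑ i, ∑ j, (v i * x i) * (v j * x j) := by
        simp only [dotProduct, Matrix.mulVec, Matrix.vecMulVec_apply, Finset.mul_sum]
        refine Finset.sum_congr rfl fun i _ => Finset.sum_congr rfl fun j _ => by ring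
    _ = (∑ i, v i * x i) ^ 2 := by rw [pow_two, Finset.sum_mul_sum]

lemma psd_aI_bvv (v : Fin 3 → ℝ) (a b : ℝ) (ha : 0 ≤ a)
    (hab : 0 ≤ a + b * (∑ i, v i ^ 2)) :
    (a • (1 : Matrix (Fin 3) (Fin 3) ℝ) + b • Matrix.vecMulVec v v).PosSemidef := by
  refine Matrix.PosSemidef.of_dotProduct_mulVec_nonneg ?_ fun x => ?_
  · have h1 : (Matrix.vecMulVec v v).IsHermitian := by
      ext i j
      simp [Matrix.conjTranspose_apply, Matrix.vecMulVec_apply, mul_comm]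
    refine Matrix.IsHermitian.add ?_ ?_
    · unfold Matrix.IsHermitian
      rw [Matrix.conjTranspose_smul, Matrix.isHermitian_one.eq]; simp
    · unfold Matrix.IsHermitian
      rw [Matrix.conjTranspose_smul, h1.eq]; simp
  · have hx : star x = x := by simp
    rw [hx, Matrix.add_mulVec, dotProduct_add, Matrix.smul_mulVec,
      Matrix.smul_mulVec, dotProduct_smul, dotProduct_smul,
      Matrix.one_mulVec, dot_vecMulVec]
    have hxx : x ⬝ᵥ x = ∑ i, x i ^ 2 := by simp [dotProduct, pow_two]
    have hcs : (∑ i, v i * x i) ^ 2 ≤ (∑ i, v i ^ 2) * (∑ i, x i ^ 2) :=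
      Finset.sum_mul_sq_le_sq_mul_sq Finset.univ v x
    have hxx0 : 0 ≤ ∑ i, x i ^ 2 := Finset.sum_nonneg fun i _ => sq_nonneg _
    rw [hxx, smul_eq_mul, smul_eq_mul]
    rcases le_or_gt 0 b with hb | hb
    · have := sq_nonneg (∑ i, v i * x i)
      positivity
    · nlinarith [mul_nonneg hab hxx0]

lemma G3a_scalar (E A d : ℝ) (hE : 0 < E) (hA : 0 < A) (hd : 0 < d)
    (h : d ^ 2 * E ≤ A * (A + d ^ 2)) :
    0 ≤ E⁻¹ - (A + 0 ^ 2)⁻¹ + (A + d ^ 2)⁻¹ := by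
  have hP : 0 < A + d ^ 2 := by positivity
  have e : E⁻¹ - (A + 0 ^ 2)⁻¹ + (A + d ^ 2)⁻¹
      = (A * (A + d ^ 2) - d ^ 2 * E) / (E * A * (A + d ^ 2)) := by
    field_simp
    ring
  rw [e]
  exact div_nonneg (by linarith) (by positivity)

lemma G4a_scalar (E A d : ℝ) (hE : 0 < E) (hA : 0 < A) (hd : 0 < d) :
    0 ≤ E⁻¹ - (A + d ^ 2)⁻¹ + (A + 0 ^ 2)⁻¹ := by
  have hP : 0 < A + d ^ 2 := by positivity
  have e : E⁻¹ - (A + d ^ 2)⁻¹ + (A + 0 ^ 2)⁻¹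
      = E⁻¹ + d ^ 2 / (A * (A + d ^ 2)) := by
    field_simp
    ring
  rw [e]
  positivity

lemma G3b_scalar (E A d : ℝ) (hE : 0 < E) (hA : 0 < A) (hd : 0 < d) :
    0 ≤ E⁻¹ - (A + 0 ^ 2)⁻¹ + (A + d ^ 2)⁻¹ +
      (-((A + d ^ 2)⁻¹ * ((A + 2 * d ^ 2) / (A + d ^ 2) ^ 2)) -
        -((A + 0 ^ 2)⁻¹ * ((A + 2 * 0 ^ 2) / (A + 0 ^ 2) ^ 2))) * A := by
  have hP : 0 < A + d ^ 2 := by positivity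
  have e : E⁻¹ - (A + 0 ^ 2)⁻¹ + (A + d ^ 2)⁻¹ +
      (-((A + d ^ 2)⁻¹ * ((A + 2 * d ^ 2) / (A + d ^ 2) ^ 2)) -
        -((A + 0 ^ 2)⁻¹ * ((A + 2 * 0 ^ 2) / (A + 0 ^ 2) ^ 2))) * A
      = E⁻¹ + d ^ 4 / (A + d ^ 2) ^ 3 := by
    field_simp
    ring
  rw [e]
  positivity

lemma G4b_scalar (E A d : ℝ) (hE : 0 < E) (hA : 0 < A) (hd : 0 < d)
    (h : d ^ 4 * E ≤ (A + d ^ 2) ^ 3) :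
    0 ≤ E⁻¹ - (A + d ^ 2)⁻¹ + (A + 0 ^ 2)⁻¹ +
      (-((A + 0 ^ 2)⁻¹ * ((A + 2 * 0 ^ 2) / (A + 0 ^ 2) ^ 2)) -
        -((A + d ^ 2)⁻¹ * ((A + 2 * d ^ 2) / (A + d ^ 2) ^ 2))) * A := by
  have hP : 0 < A + d ^ 2 := by positivity
  have e : E⁻¹ - (A + d ^ 2)⁻¹ + (A + 0 ^ 2)⁻¹ +
      (-((A + 0 ^ 2)⁻¹ * ((A + 2 * 0 ^ 2) / (A + 0 ^ 2) ^ 2)) -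
        -((A + d ^ 2)⁻¹ * ((A + 2 * d ^ 2) / (A + d ^ 2) ^ 2))) * A
      = ((A + d ^ 2) ^ 3 - d ^ 4 * E) / (E * (A + d ^ 2) ^ 3) := by
    field_simp
    ring
  rw [e]
  exact div_nonneg (by linarith) (by positivity)

/-- The smoothed information-matrix summand S^δ(x;z) (closed form of
(∂h_δ/∂x)ᵀ(∂h_δ/∂x) with h_δ(x,z) = (z−x)/√(‖z−x‖²+δ²)). -/
noncomputable def Smat (δ : ℝ) (x z : EuclideanSpace ℝ (Fin 3)) : Matrix (Fin 3) (Fin 3) ℝ :=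
  ((‖z - x‖ ^ 2 + δ ^ 2)⁻¹) •
    ((1 : Matrix (Fin 3) (Fin 3) ℝ) -
      ((‖z - x‖ ^ 2 + 2 * δ ^ 2) / (‖z - x‖ ^ 2 + δ ^ 2) ^ 2) •
        Matrix.vecMulVec (fun i => z i - x i) (fun i => z i - x i))

/-- The information matrix 𝒥_δ(x; z_{1:M}) = Σ̄⁻¹ + σ_m⁻² ∑_j S^δ(x; z_j). -/
noncomputable def infoMat (δ σm : ℝ) (Sigbar : Matrix (Fin 3) (Fin 3) ℝ)
    {M : ℕ} (x : EuclideanSpace ℝ (Fin 3)) (z : Fin M → EuclideanSpace ℝ (Fin 3)) :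
    Matrix (Fin 3) (Fin 3) ℝ :=
  Sigbar⁻¹ + (σm ^ 2)⁻¹ • ∑ j, Smat δ x (z j)

lemma norm_sq_eq (x z : EuclideanSpace ℝ (Fin 3)) :
    ‖z - x‖ ^ 2 = ∑ i, (z i - x i) ^ 2 := by
  rw [EuclideanSpace.norm_eq, Real.sq_sqrt (by positivity)]
  refine Finset.sum_congr rfl fun i _ => ?_
  simp [sq_abs]

lemma Smat_decomp (δ : ℝ) (x z : EuclideanSpace ℝ (Fin 3)) :
    Smat δ x z = ((‖z - x‖ ^ 2 + δ ^ 2)⁻¹) • (1 : Matrix (Fin 3) (Fin 3) ℝ)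
      + (-((‖z - x‖ ^ 2 + δ ^ 2)⁻¹ * ((‖z - x‖ ^ 2 + 2 * δ ^ 2) / (‖z - x‖ ^ 2 + δ ^ 2) ^ 2))) •
        Matrix.vecMulVec (fun i => z i - x i) (fun i => z i - x i) := by
  unfold Smat
  module

lemma summand_bounds {Rmin ζ δ : ℝ} (hR : 0 < Rmin) (hζ : 1 < ζ) (hδ0 : 0 < δ)
    (hδζ : δ * ζ < Rmin) (x z : EuclideanSpace ℝ (Fin 3)) (hxz : Rmin ≤ ‖z - x‖) :
    (Smat δ x z).PosSemidef ∧ (Smat 0 x z).PosSemidef ∧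
    (((Rmin ^ 2 * (1 + ζ ^ 2))⁻¹) • (1 : Matrix (Fin 3) (Fin 3) ℝ)
        - (Smat 0 x z - Smat δ x z)).PosSemidef ∧
    (((Rmin ^ 2 * (1 + ζ ^ 2))⁻¹) • (1 : Matrix (Fin 3) (Fin 3) ℝ)
        - (Smat δ x z - Smat 0 x z)).PosSemidef := by
  have hKv : ∑ i, (z i - x i) ^ 2 = ‖z - x‖ ^ 2 := (norm_sq_eq x z).symm
  have hRr : Rmin ^ 2 ≤ ‖z - x‖ ^ 2 := by
    have h0 : (0:ℝ) ≤ ‖z - x‖ := norm_nonneg _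
    nlinarith
  have hr0 : 0 < ‖z - x‖ ^ 2 := by nlinarith
  have hδ2 : 0 < δ ^ 2 := by positivity
  have hζ0 : (0:ℝ) < ζ := by linarith
  have hζδ2 : δ ^ 2 * ζ ^ 2 ≤ ‖z - x‖ ^ 2 := by nlinarith [mul_pos hδ0 hζ0]
  have hP : 0 < ‖z - x‖ ^ 2 + δ ^ 2 := by linarith
  have hE : 0 < Rmin ^ 2 * (1 + ζ ^ 2) := by positivity
  have key : δ ^ 2 * (1 + ζ ^ 2) ≤ ‖z - x‖ ^ 2 + δ ^ 2 := by nlinarith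
  have hrne : ‖z - x‖ ^ 2 ≠ 0 := hr0.ne'
  have hPne : ‖z - x‖ ^ 2 + δ ^ 2 ≠ 0 := hP.ne'
  have hEne : Rmin ^ 2 * (1 + ζ ^ 2) ≠ 0 := hE.ne'
  refine ⟨?_, ?_, ?_, ?_⟩
  · rw [Smat_decomp]
    refine psd_aI_bvv _ _ _ (by positivity) ?_
    rw [hKv]
    field_simp
    nlinarith [sq_nonneg (δ ^ 2)]
  · rw [Smat_decomp]
    refine psd_aI_bvv _ _ _ (by positivity) ?_
    rw [hKv]
    field_simp
    try refine div_nonneg ?_ (by positivity)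
    try nlinarith [sq_nonneg (δ ^ 2)]
  · rw [Smat_decomp δ, Smat_decomp 0]
    have e : ∀ c a₁ b₁ a₂ b₂ : ℝ, ∀ V : Matrix (Fin 3) (Fin 3) ℝ,
        c • (1 : Matrix (Fin 3) (Fin 3) ℝ)
          - ((a₁ • (1 : Matrix (Fin 3) (Fin 3) ℝ) + b₁ • V)
             - (a₂ • (1 : Matrix (Fin 3) (Fin 3) ℝ) + b₂ • V))
        = (c - a₁ + a₂) • (1 : Matrix (Fin 3) (Fin 3) ℝ) + (b₂ - b₁) • V := by
      intros; module
    rw [e]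
    refine psd_aI_bvv _ _ _ ?_ ?_
    · refine G3a_scalar _ _ _ hE hr0 hδ0 ?_
      nlinarith [mul_le_mul key hRr (by positivity : (0:ℝ) ≤ Rmin ^ 2) hP.le]
    · rw [hKv]
      exact G3b_scalar _ _ _ hE hr0 hδ0
  · rw [Smat_decomp δ, Smat_decomp 0]
    have e : ∀ c a₁ b₁ a₂ b₂ : ℝ, ∀ V : Matrix (Fin 3) (Fin 3) ℝ,
        c • (1 : Matrix (Fin 3) (Fin 3) ℝ)
          - ((a₁ • (1 : Matrix (Fin 3) (Fin 3) ℝ) + b₁ • V)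
             - (a₂ • (1 : Matrix (Fin 3) (Fin 3) ℝ) + b₂ • V))
        = (c - a₁ + a₂) • (1 : Matrix (Fin 3) (Fin 3) ℝ) + (b₂ - b₁) • V := by
      intros; module
    rw [e]
    refine psd_aI_bvv _ _ _ ?_ ?_
    · exact G4a_scalar _ _ _ hE hr0 hδ0
    · rw [hKv]
      refine G4b_scalar _ _ _ hE hr0 hδ0 ?_
      nlinarith [mul_le_mul key hRr (by positivity : (0:ℝ) ≤ Rmin ^ 2) hP.le,
        sq_nonneg (‖z - x‖ ^ 2 - δ ^ 2), sq_nonneg (‖z - x‖ ^ 2 + δ ^ 2),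
        mul_pos hP hP, mul_pos (mul_pos hP hP) hP, mul_pos hδ2 hr0]

/-- Theorem 1: with s₀ = (η/(η+1))·(R_min²/M)·σ_m²·(1+ζ²) and δ ∈ (0, R_min/ζ),
if tr(𝒥_δ(x)⁻¹) = s ≤ s₀ then s/(1+η) ≤ tr(𝒥₀(x)⁻¹) ≤ s(1+η); and the same
implication with the roles of 𝒥_δ and 𝒥₀ reversed. -/
theorem stmt_14 (Rmin σm η ζ : ℝ) (M : ℕ)
    (hR : 0 < Rmin) (hσ : 0 < σm) (hη : 0 < η) (hζ : 1 < ζ)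
    (Sigbar : Matrix (Fin 3) (Fin 3) ℝ) (hSig : Sigbar.PosDef)
    (z : Fin M → EuclideanSpace ℝ (Fin 3)) (δ : ℝ) (hδ0 : 0 < δ) (hδ1 : δ < Rmin / ζ)
    (s0 : ℝ) (hs0 : s0 = (η / (η + 1)) * (Rmin ^ 2 / M) * σm ^ 2 * (1 + ζ ^ 2)) :
    ∀ x : EuclideanSpace ℝ (Fin 3), (∀ j, Rmin ≤ ‖x - z j‖) →
      ∀ s : ℝ,
        (((infoMat δ σm Sigbar x z)⁻¹).trace = s → s ≤ s0 →
          s / (1 + η) ≤ ((infoMat 0 σm Sigbar x z)⁻¹).trace ∧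
          ((infoMat 0 σm Sigbar x z)⁻¹).trace ≤ s * (1 + η)) ∧
        (((infoMat 0 σm Sigbar x z)⁻¹).trace = s → s ≤ s0 →
          s / (1 + η) ≤ ((infoMat δ σm Sigbar x z)⁻¹).trace ∧
          ((infoMat δ σm Sigbar x z)⁻¹).trace ≤ s * (1 + η)) := by
  intro x hx s
  have hζ0 : (0:ℝ) < ζ := by linarith
  have hδζ : δ * ζ < Rmin := (lt_div_iff₀ hζ0).mp hδ1
  have hxz : ∀ j, Rmin ≤ ‖z j - x‖ := fun j => by rw [norm_sub_rev]; exact hx j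
  have hsb := fun j => summand_bounds hR hζ hδ0 hδζ x (z j) (hxz j)
  have hApd : (infoMat δ σm Sigbar x z).PosDef := by
    unfold infoMat
    exact hSig.inv.add_posSemidef (psd_smul (by positivity) (psd_sum _ fun j => (hsb j).1))
  have hBpd : (infoMat 0 σm Sigbar x z).PosDef := by
    unfold infoMat
    exact hSig.inv.add_posSemidef (psd_smul (by positivity) (psd_sum _ fun j => (hsb j).2.1))
  set ε₀ : ℝ := (Rmin ^ 2 * (1 + ζ ^ 2))⁻¹ with hε₀def
  set ε : ℝ := (σm ^ 2)⁻¹ * (M * ε₀) with hεdef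
  have hsum1 : (ε • (1 : Matrix (Fin 3) (Fin 3) ℝ)
      - (infoMat 0 σm Sigbar x z - infoMat δ σm Sigbar x z)).PosSemidef := by
    have e : ε • (1 : Matrix (Fin 3) (Fin 3) ℝ)
        - (infoMat 0 σm Sigbar x z - infoMat δ σm Sigbar x z)
        = (σm ^ 2)⁻¹ • ∑ j, (ε₀ • (1 : Matrix (Fin 3) (Fin 3) ℝ)
            - (Smat 0 x (z j) - Smat δ x (z j))) := by
      unfold infoMat
      rw [Finset.sum_sub_distrib, Finset.sum_sub_distrib, Finset.sum_const,
        Finset.card_univ, Fintype.card_fin, ← Nat.cast_smul_eq_nsmul ℝ, hεdef]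
      module
    rw [e]
    exact psd_smul (by positivity) (psd_sum _ fun j => (hsb j).2.2.1)
  have hsum2 : (ε • (1 : Matrix (Fin 3) (Fin 3) ℝ)
      - (infoMat δ σm Sigbar x z - infoMat 0 σm Sigbar x z)).PosSemidef := by
    have e : ε • (1 : Matrix (Fin 3) (Fin 3) ℝ)
        - (infoMat δ σm Sigbar x z - infoMat 0 σm Sigbar x z)
        = (σm ^ 2)⁻¹ • ∑ j, (ε₀ • (1 : Matrix (Fin 3) (Fin 3) ℝ)
            - (Smat δ x (z j) - Smat 0 x (z j))) := by
      unfold infoMat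
      rw [Finset.sum_sub_distrib, Finset.sum_sub_distrib, Finset.sum_const,
        Finset.card_univ, Fintype.card_fin, ← Nat.cast_smul_eq_nsmul ℝ, hεdef]
      module
    rw [e]
    exact psd_smul (by positivity) (psd_sum _ fun j => (hsb j).2.2.2)
  constructor
  · intro htr hle
    have hspos : 0 < s := htr ▸ trace_pos' hApd.inv
    have hM : M ≠ 0 := by
      rintro rfl
      rw [hs0] at hle
      simp at hle
      linarith
    have hMpos : (0:ℝ) < M := Nat.cast_pos.mpr (Nat.pos_of_ne_zero hM)
    have hεpos : 0 < ε := by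
      rw [hεdef, hε₀def]; positivity
    have hεs0 : ε * s0 = η / (1 + η) := by
      rw [hεdef, hε₀def, hs0]
      have h1 : (M:ℝ) ≠ 0 := hMpos.ne'
      have h2 : (1:ℝ) + η ≠ 0 := by positivity
      have h3 : η + 1 ≠ 0 := by positivity
      field_simp
      ring
    have hs' : ε * s ≤ η / (1 + η) := by
      rw [← hεs0]
      exact mul_le_mul_of_nonneg_left hle hεpos.le
    exact key_lemma hApd hBpd hη hεpos hsum1 hsum2 htr hs'
  · intro htr hle
    have hspos : 0 < s := htr ▸ trace_pos' hBpd.inv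
    have hM : M ≠ 0 := by
      rintro rfl
      rw [hs0] at hle
      simp at hle
      linarith
    have hMpos : (0:ℝ) < M := Nat.cast_pos.mpr (Nat.pos_of_ne_zero hM)
    have hεpos : 0 < ε := by
      rw [hεdef, hε₀def]; positivity
    have hεs0 : ε * s0 = η / (1 + η) := by
      rw [hεdef, hε₀def, hs0]
      have h1 : (M:ℝ) ≠ 0 := hMpos.ne'
      have h2 : (1:ℝ) + η ≠ 0 := by positivity
      have h3 : η + 1 ≠ 0 := by positivity
      field_simp
      ring
    have hs' : ε * s ≤ η / (1 + η) := by
      rw [← hεs0]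
      exact mul_le_mul_of_nonneg_left hle hεpos.le
    exact key_lemma hBpd hApd hη hεpos hsum2 hsum1 htr hs'
end
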